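/- arXiv:1710.09222 — 7 statements merged into one kernel-verified Lean document; each statement's English description precedes it below -/
import Mathlib

section
/- Every homogeneous polynomial h in ℤ[x_1, ..., x_n] of positive degree can be uniquely written as h = h^{(1)}·x_1 + h^{(2)}·(x_2 - x_1) + ⋯ + h^{(n)}·(x_n - x_{n-1}), where each h^{(r)} lies in ℤ[x_1, ..., x_r]. -/
open MvPolynomial Finset

/-- the substitution `y_r = x_r - x_{r-1}` -/
private noncomputable def Yp (n : ℕ) : Fin n → MvPolynomial (Fin n) ℤ := fun r =>
  X r - if hr : (r : ℕ) = 0 then 0 else X ⟨(r : ℕ) - 1, by have := r.isLt; omega⟩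

private noncomputable def phiH (n : ℕ) : MvPolynomial (Fin n) ℤ →ₐ[ℤ] MvPolynomial (Fin n) ℤ :=
  aeval (Yp n)

private noncomputable def psiH (n : ℕ) : MvPolynomial (Fin n) ℤ →ₐ[ℤ] MvPolynomial (Fin n) ℤ :=
  aeval (fun r => ∑ i ∈ Finset.Iic r, X i)

private lemma Iic_eq_insert {n : ℕ} (r : Fin n) (hr : (r : ℕ) ≠ 0) :
    Finset.Iic r = insert r (Finset.Iic (⟨(r : ℕ) - 1, by have := r.isLt; omega⟩ : Fin n)) := by
  ext i
  simp only [Finset.mem_Iic, Finset.mem_insert, Fin.le_def, Fin.ext_iff]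
  omega

private lemma notMem_Iic_pred {n : ℕ} (r : Fin n) (hr : (r : ℕ) ≠ 0) :
    r ∉ Finset.Iic (⟨(r : ℕ) - 1, by have := r.isLt; omega⟩ : Fin n) := by
  simp only [Finset.mem_Iic, Fin.le_def]
  omega

private lemma psi_Yp {n : ℕ} (r : Fin n) : psiH n (Yp n r) = X r := by
  by_cases hr : (r : ℕ) = 0
  · have hIic : Finset.Iic r = {r} := by
      ext i; simp only [Finset.mem_Iic, Finset.mem_singleton, Fin.le_def, Fin.ext_iff]
      have := i.isLt; omega
    simp [Yp, psiH, hr, hIic]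
  · simp only [Yp, psiH, hr, dif_neg, not_false_iff, map_sub, aeval_X]
    rw [Iic_eq_insert r hr, Finset.sum_insert (notMem_Iic_pred r hr)]
    ring

private lemma telescope {n : ℕ} (r : Fin n) : ∑ i ∈ Finset.Iic r, Yp n i = X r := by
  suffices H : ∀ k : ℕ, ∀ r : Fin n, (r : ℕ) ≤ k → ∑ i ∈ Finset.Iic r, Yp n i = X r from
    H r r le_rfl
  intro k
  induction k with
  | zero =>
    intro r hr
    have hIic : Finset.Iic r = {r} := by
      ext i; simp only [Finset.mem_Iic, Finset.mem_singleton, Fin.le_def, Fin.ext_iff]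
      have := i.isLt; omega
    simp [hIic, Yp, Nat.le_zero.mp hr]
  | succ k ih =>
    intro r hr
    by_cases hr0 : (r : ℕ) = 0
    · have hIic : Finset.Iic r = {r} := by
        ext i; simp only [Finset.mem_Iic, Finset.mem_singleton, Fin.le_def, Fin.ext_iff]
        have := i.isLt; omega
      simp [hIic, Yp, hr0]
    · rw [Iic_eq_insert r hr0, Finset.sum_insert (notMem_Iic_pred r hr0),
        ih _ (by simp; omega)]
      simp only [Yp, dif_neg hr0]
      ring

private lemma psi_phi {n : ℕ} (p : MvPolynomial (Fin n) ℤ) : psiH n (phiH n p) = p := by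
  have : (psiH n).comp (phiH n) = AlgHom.id ℤ _ := by
    apply algHom_ext
    intro r
    simp only [AlgHom.comp_apply, AlgHom.id_apply, phiH, aeval_X]
    exact psi_Yp r
  exact DFunLike.congr_fun this p

private lemma phi_psi {n : ℕ} (p : MvPolynomial (Fin n) ℤ) : phiH n (psiH n p) = p := by
  have : (phiH n).comp (psiH n) = AlgHom.id ℤ _ := by
    apply algHom_ext
    intro r
    simp only [AlgHom.comp_apply, AlgHom.id_apply, psiH, aeval_X, map_sum]
    simp only [phiH, aeval_X]
    exact telescope r
  exact DFunLike.congr_fun this p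

private lemma aeval_mem_supported {n : ℕ} {S : Set (Fin n)}
    (f : Fin n → MvPolynomial (Fin n) ℤ) (hf : ∀ i ∈ S, f i ∈ supported ℤ S)
    {p : MvPolynomial (Fin n) ℤ} (hp : p ∈ supported ℤ S) :
    aeval f p ∈ supported ℤ S := by
  refine Algebra.adjoin_induction ?_ ?_ ?_ ?_ hp
  · rintro x ⟨i, hi, rfl⟩
    rw [aeval_X]; exact hf i hi
  · intro r
    rw [AlgHom.commutes]; exact Subalgebra.algebraMap_mem _ r
  · intro x y _ _ hx hy; rw [map_add]; exact add_mem hx hy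
  · intro x y _ _ hx hy; rw [map_mul]; exact mul_mem hx hy

private lemma coeff_zero_of_supported {n : ℕ} {p : MvPolynomial (Fin n) ℤ} {S : Set (Fin n)}
    (hp : p ∈ supported ℤ S) {β : Fin n →₀ ℕ} {i : Fin n} (hi : i ∉ S) (hβ : β i ≠ 0) :
    MvPolynomial.coeff β p = 0 := by
  by_contra hc
  exact hi (mem_supported.1 hp ((mem_vars i).2
    ⟨β, MvPolynomial.mem_support_iff.2 hc, Finsupp.mem_support_iff.2 hβ⟩))

private lemma unique_aux {n : ℕ} (e : Fin n → MvPolynomial (Fin n) ℤ)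
    (hsup : ∀ r, e r ∈ supported ℤ {i : Fin n | i ≤ r})
    (hsum : ∑ r : Fin n, e r * X r = 0) : ∀ r, e r = 0 := by
  classical
  suffices H : ∀ k : ℕ, ∀ r : Fin n, n ≤ k + (r : ℕ) → e r = 0 by
    intro r; exact H n r (by omega)
  intro k
  induction k with
  | zero => intro r hr; have := r.isLt; omega
  | succ k ih =>
    intro r _
    by_cases hcase : n ≤ k + (r : ℕ)
    · exact ih r hcase
    have hgt : ∀ s : Fin n, r < s → e s = 0 := fun s hs =>
      ih s (by have := Fin.lt_def.mp hs; have := s.isLt; omega)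
    ext α
    have h0 : MvPolynomial.coeff (α + Finsupp.single r 1) (∑ s : Fin n, e s * X s) = 0 := by
      rw [hsum]; simp
    rw [MvPolynomial.coeff_sum] at h0
    rw [MvPolynomial.coeff_zero]
    rw [Finset.sum_eq_single r] at h0
    · rw [← h0, coeff_mul_X']
      have hmem : r ∈ (α + Finsupp.single r 1).support := by
        simp [Finsupp.mem_support_iff]
      rw [if_pos hmem, add_tsub_cancel_right]
    · intro s _ hs
      rcases lt_or_gt_of_ne hs with hlt | hgt'
      · -- s < r : the variable r does not occur in e s * X s
        refine coeff_zero_of_supported (S := {i : Fin n | i ≤ s}) (i := r) ?_ ?_ ?_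
        · exact mul_mem (hsup s) (X_mem_supported.2 (Set.mem_setOf_eq ▸ le_rfl))
        · simp only [Set.mem_setOf_eq]; exact not_le_of_gt hlt
        · simp [Finsupp.single_apply]
      · rw [hgt s hgt', zero_mul, MvPolynomial.coeff_zero]
    · intro h; exact absurd (Finset.mem_univ r) h

private lemma monomial_mem_supported {n : ℕ} {S : Set (Fin n)} (β : Fin n →₀ ℕ) (c : ℤ)
    (hβ : ↑β.support ⊆ S) : (monomial β c : MvPolynomial (Fin n) ℤ) ∈ supported ℤ S := by
  rw [mem_supported]
  rcases eq_or_ne c 0 with rfl | hc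
  · simp
  · rw [vars_monomial hc]; exact hβ

private lemma exists_aux {n : ℕ} (hn : 0 < n) (p : MvPolynomial (Fin n) ℤ)
    (hp : MvPolynomial.coeff 0 p = 0) :
    ∃ q : Fin n → MvPolynomial (Fin n) ℤ,
      (∀ r, q r ∈ supported ℤ {i : Fin n | i ≤ r}) ∧ p = ∑ r : Fin n, q r * X r := by
  classical
  haveI : NeZero n := ⟨hn.ne'⟩
  set M : (Fin n →₀ ℕ) → Fin n := fun α =>
    if h : α.support.Nonempty then α.support.max' h else 0 with hM
  have hMmem : ∀ α ∈ p.support, M α ∈ α.support := by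
    intro α hα
    have hα0 : α ≠ 0 := by
      rintro rfl
      exact (MvPolynomial.mem_support_iff.1 hα) hp
    have hne : α.support.Nonempty := Finsupp.support_nonempty_iff.2 hα0
    simp only [hM, dif_pos hne]
    exact α.support.max'_mem hne
  have hMle : ∀ α ∈ p.support, ∀ i ∈ α.support, i ≤ M α := by
    intro α hα i hi
    have hα0 : α ≠ 0 := by
      rintro rfl
      exact (MvPolynomial.mem_support_iff.1 hα) hp
    have hne : α.support.Nonempty := Finsupp.support_nonempty_iff.2 hα0
    simp only [hM, dif_pos hne]
    exact α.support.le_max' i hi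
  refine ⟨fun r => ∑ α ∈ p.support.filter (fun α => M α = r),
      monomial (α - Finsupp.single r 1) (MvPolynomial.coeff α p), ?_, ?_⟩
  · intro r
    refine Subalgebra.sum_mem _ ?_
    intro α hα
    rw [Finset.mem_filter] at hα
    refine monomial_mem_supported _ _ ?_
    intro i hi
    have hi' : i ∈ α.support := Finsupp.support_tsub (by exact_mod_cast hi)
    have := hMle α hα.1 i hi'
    rw [hα.2] at this
    exact this
  · symm
    calc ∑ r : Fin n, (∑ α ∈ p.support.filter (fun α => M α = r),
          monomial (α - Finsupp.single r 1) (MvPolynomial.coeff α p)) * X r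
        = ∑ r : Fin n, ∑ α ∈ p.support.filter (fun α => M α = r),
            monomial α (MvPolynomial.coeff α p) := ?_
      _ = ∑ α ∈ p.support, monomial α (MvPolynomial.coeff α p) :=
          Finset.sum_fiberwise p.support M _
      _ = p := MvPolynomial.support_sum_monomial_coeff p
    apply Finset.sum_congr rfl
    intro r _
    rw [Finset.sum_mul]
    apply Finset.sum_congr rfl
    intro α hα
    rw [Finset.mem_filter] at hα
    have hr : α r ≠ 0 := by
      have := hMmem α hα.1
      rw [hα.2] at this
      exact Finsupp.mem_support_iff.1 this
    rw [X, monomial_mul, mul_one, tsub_add_cancel_of_le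
      (Finsupp.single_le_iff.2 (Nat.one_le_iff_ne_zero.2 hr))]

open MvPolynomial in
/-- Taylor expansion: every homogeneous polynomial `h` of positive degree in
`ℤ[x_0,...,x_{n-1}]` is uniquely `h = g_0·x_0 + ∑_{r≥1} g_r·(x_r - x_{r-1})`
with `g_r ∈ ℤ[x_0,...,x_r]`. -/
theorem stmt_8 (n : ℕ) (hn : 0 < n) (h : MvPolynomial (Fin n) ℤ) (d : ℕ) (hd : 0 < d)
    (hh : h.IsHomogeneous d) :
    ∃! g : Fin n → MvPolynomial (Fin n) ℤ,
      (∀ r, g r ∈ MvPolynomial.supported ℤ {i : Fin n | i ≤ r}) ∧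
      h = ∑ r : Fin n, g r *
        (X r - if hr : (r : ℕ) = 0 then 0
               else X ⟨(r : ℕ) - 1, by have := r.isLt; omega⟩) := by
  classical
  have hY : ∀ r : Fin n, (X r - if hr : (r : ℕ) = 0 then 0
      else X (⟨(r : ℕ) - 1, by have := r.isLt; omega⟩ : Fin n) : MvPolynomial (Fin n) ℤ)
      = Yp n r := fun r => rfl
  -- constant coefficient of ψ h is zero
  have hcc : constantCoeff (psiH n h) = constantCoeff h := by
    have : (constantCoeff).comp (psiH n).toRingHom = constantCoeff := by
      apply ringHom_ext
      · intro a; simp [psiH]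
      · intro i; simp [psiH, map_sum]
    exact RingHom.congr_fun this h
  have hc0 : MvPolynomial.coeff 0 (psiH n h) = 0 := by
    have h1 : constantCoeff h = 0 := by
      rw [constantCoeff_eq]
      exact hh.coeff_eq_zero (by rw [map_zero]; omega)
    rw [← constantCoeff_eq, hcc, h1]
  obtain ⟨q, hqsup, hqeq⟩ := exists_aux hn (psiH n h) hc0
  have hYsup : ∀ r : Fin n, ∀ i ∈ {j : Fin n | j ≤ r}, Yp n i ∈ supported ℤ {j : Fin n | j ≤ r} := by
    intro r i hi
    simp only [Set.mem_setOf_eq] at hi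
    unfold Yp
    by_cases h0 : (i : ℕ) = 0
    · rw [dif_pos h0]
      exact sub_mem (X_mem_supported.2 hi) (zero_mem _)
    · rw [dif_neg h0]
      refine sub_mem (X_mem_supported.2 hi) (X_mem_supported.2 ?_)
      simp only [Set.mem_setOf_eq, Fin.le_def]
      have := Fin.le_def.mp hi
      omega
  have hPsup : ∀ r : Fin n, ∀ i ∈ {j : Fin n | j ≤ r},
      (∑ j ∈ Finset.Iic i, X j : MvPolynomial (Fin n) ℤ) ∈ supported ℤ {j : Fin n | j ≤ r} := by
    intro r i hi
    refine Subalgebra.sum_mem _ ?_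
    intro j hj
    rw [Finset.mem_Iic] at hj
    exact X_mem_supported.2 (le_trans hj hi)
  refine ⟨fun r => phiH n (q r), ⟨?_, ?_⟩, ?_⟩
  · intro r
    exact aeval_mem_supported _ (hYsup r) (hqsup r)
  · conv_lhs => rw [← phi_psi h, hqeq]
    rw [map_sum]
    apply Finset.sum_congr rfl
    intro r _
    rw [hY r, map_mul]
    congr 1
    simp [phiH]
  · rintro g' ⟨hg'sup, hg'eq⟩
    have hpsih : psiH n h = ∑ s : Fin n, psiH n (g' s) * X s := by
      conv_lhs => rw [hg'eq]
      rw [map_sum]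
      apply Finset.sum_congr rfl
      intro s _
      rw [hY s, map_mul, psi_Yp]
    have hzero : ∑ s : Fin n, (psiH n (g' s) - q s) * X s = 0 := by
      simp only [sub_mul, Finset.sum_sub_distrib]
      rw [← hpsih, ← hqeq, sub_self]
    have hq'sup : ∀ s, psiH n (g' s) ∈ supported ℤ {i : Fin n | i ≤ s} := fun s =>
      aeval_mem_supported _ (hPsup s) (hg'sup s)
    have heq0 := unique_aux _ (fun s => sub_mem (hq'sup s) (hqsup s)) hzero
    funext r
    have : psiH n (g' r) = q r := sub_eq_zero.mp (heq0 r)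
    calc g' r = phiH n (psiH n (g' r)) := (phi_psi _).symm
      _ = phiH n (q r) := by rw [this]
end

section
/- For the graded ring quotient ℤ[x_1,...,x_n]/⟨e_1,...,e_n⟩ (where e_r is the r-th elementary symmetric polynomial), the image of x_1^r under the additional identification x_1 = x_2 = ⋯ = x_n yields the ring ℤ[x]/⟨binom(n,1)·x, binom(n,2)·x^2, ..., binom(n,n)·x^n⟩, in which the additive order of x^r equals b_{n,r} = gcd{binom(n,1),...,binom(n,r)} for each 1 ≤ r ≤ n. -/
open Polynomial in
/-- In `ℤ[x]/⟨C(n,1)x, C(n,2)x², ..., C(n,n)xⁿ⟩` the additive order of the class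
of `x^r` equals `b_{n,r} = gcd{C(n,1),...,C(n,r)}`, for `1 ≤ r ≤ n`. -/
theorem stmt_11 (n r : ℕ) (hn : 2 ≤ n) (hr1 : 1 ≤ r) (hrn : r ≤ n) :
    addOrderOf ((Ideal.Quotient.mk (Ideal.span
        {q : Polynomial ℤ | ∃ k, 1 ≤ k ∧ k ≤ n ∧ q = C (n.choose k : ℤ) * X ^ k}))
      ((X : Polynomial ℤ) ^ r)) = (Finset.Icc 1 r).gcd n.choose := by
  set b : ℕ := (Finset.Icc 1 r).gcd n.choose with hb
  set S : Set (Polynomial ℤ) :=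
    {q : Polynomial ℤ | ∃ k, 1 ≤ k ∧ k ≤ n ∧ q = C (n.choose k : ℤ) * X ^ k} with hS
  set I : Ideal (Polynomial ℤ) := Ideal.span S with hI
  -- forward: anything in I has r-th coefficient divisible by b
  have hfwd : ∀ p ∈ I, ∀ q : Polynomial ℤ, (b : ℤ) ∣ (q * p).coeff r := by
    intro p hp
    refine Submodule.span_induction ?_ ?_ ?_ ?_ hp
    · rintro x ⟨k, hk1, hkn, rfl⟩ q
      rw [← mul_assoc, coeff_mul_X_pow']
      split_ifs with h
      · rw [coeff_mul_C]
        exact Dvd.dvd.mul_left (by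
          exact_mod_cast Int.natCast_dvd_natCast.mpr
            (Finset.gcd_dvd (Finset.mem_Icc.mpr ⟨hk1, h⟩))) _
      · exact dvd_zero _
    · intro q; simp
    · intro x y _ _ hx hy q
      rw [mul_add, coeff_add]; exact dvd_add (hx q) (hy q)
    · intro a x _ hx q
      rw [smul_eq_mul, ← mul_assoc]; exact hx (q * a)
  -- the set of m with C m * X^r ∈ I is an ideal of ℤ
  set J : Ideal ℤ :=
    { carrier := {m : ℤ | C m * X ^ r ∈ I}
      add_mem' := fun {a c} ha hc => by
        simpa [C_add, add_mul] using I.add_mem ha hc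
      zero_mem' := by simp
      smul_mem' := fun a m hm => by
        simpa [smul_eq_mul, C_mul, mul_assoc] using I.mul_mem_left (C a) hm } with hJ
  have hchoose : ∀ k ∈ Finset.Icc 1 r, ((n.choose k : ℤ)) ∈ J := by
    intro k hk
    obtain ⟨hk1, hkr⟩ := Finset.mem_Icc.mp hk
    show C (n.choose k : ℤ) * X ^ r ∈ I
    have : C (n.choose k : ℤ) * X ^ r = X ^ (r - k) * (C (n.choose k : ℤ) * X ^ k) := by
      rw [mul_comm (X ^ (r-k)), mul_assoc, ← pow_add, Nat.add_sub_cancel' hkr]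
    rw [this]
    exact I.mul_mem_left _ (Ideal.subset_span ⟨k, hk1, hkr.trans hrn, rfl⟩)
  have key : ∀ m : ℤ, C m * X ^ r ∈ I ↔ (b : ℤ) ∣ m := by
    intro m
    constructor
    · intro hm
      have := hfwd _ hm 1
      simpa [coeff_C_mul, coeff_X_pow] using this
    · intro hdvd
      -- b ∈ J since J is principal and its generator divides all choose k, hence b
      obtain ⟨g, hg⟩ := (IsPrincipalIdealRing.principal J).1
      have hg' : J = Ideal.span {g} := hg
      have hgb : g ∣ (b : ℤ) := by
        have : g.natAbs ∣ b := by
          apply Finset.dvd_gcd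
          intro k hk
          have h1 : (n.choose k : ℤ) ∈ Ideal.span {g} := hg' ▸ hchoose k hk
          rw [Ideal.mem_span_singleton] at h1
          have h2 := Int.natAbs_dvd_natAbs.mpr h1
          rwa [Int.natAbs_natCast] at h2
        exact (Int.natAbs_dvd).mp (Int.natCast_dvd_natCast.mpr this)
      have hbJ : (b : ℤ) ∈ J := by
        rw [hg', Ideal.mem_span_singleton]; exact hgb
      have hmJ : m ∈ J := by
        obtain ⟨t, rfl⟩ := hdvd
        exact J.mul_mem_right t hbJ
      exact hmJ
  -- now translate to addOrderOf
  set q0 := (Ideal.Quotient.mk I) ((X : Polynomial ℤ) ^ r) with hq0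
  have hsmul : ∀ m : ℕ, m • q0 = 0 ↔ b ∣ m := by
    intro m
    rw [hq0, ← map_nsmul, Ideal.Quotient.eq_zero_iff_mem]
    have : (m : ℕ) • (X : Polynomial ℤ) ^ r = C (m : ℤ) * X ^ r := by
      rw [nsmul_eq_mul]; norm_cast
    rw [this, key, Int.natCast_dvd_natCast]
  refine Nat.dvd_antisymm ?_ ?_
  · exact addOrderOf_dvd_iff_nsmul_eq_zero.mpr ((hsmul b).mpr dvd_rfl)
  · exact (hsmul _).mp (addOrderOf_nsmul_eq_zero q0)
end

section
/- In the ring ℤ[x]/⟨binom(n,1)x, binom(n,2)x², ..., binom(n,n)xⁿ⟩, the annihilator of the class of x^r (for 1 ≤ r ≤ n) is the ideal generated by b_{n,r} = gcd{binom(n,1), ..., binom(n,r)} in ℤ. -/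
open Polynomial

private lemma gcd_mem_span_int (s : Finset ℕ) (f : ℕ → ℕ) :
    ((s.gcd f : ℕ) : ℤ) ∈ Ideal.span ((fun k => ((f k : ℕ) : ℤ)) '' s) := by
  classical
  induction s using Finset.induction with
  | empty => simp
  | insert a s h ih =>
    rw [Finset.gcd_insert]
    have hone : ((Nat.gcd (f a) (s.gcd f) : ℕ) : ℤ)
        = ((f a : ℕ) : ℤ) * Int.gcdA ((f a : ℕ) : ℤ) (((s.gcd f : ℕ)) : ℤ)
          + ((s.gcd f : ℕ) : ℤ) * Int.gcdB ((f a : ℕ) : ℤ) (((s.gcd f : ℕ)) : ℤ) := by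
      have := Int.gcd_eq_gcd_ab ((f a : ℕ) : ℤ) (((s.gcd f : ℕ)) : ℤ)
      simpa [Int.gcd_natCast_natCast] using this
    have h1 : ((f a : ℕ) : ℤ) ∈ Ideal.span ((fun k => ((f k : ℕ) : ℤ)) '' (insert a (s:Set ℕ))) :=
      Ideal.subset_span ⟨a, Set.mem_insert a _, rfl⟩
    have h2 : ((s.gcd f : ℕ) : ℤ) ∈ Ideal.span ((fun k => ((f k : ℕ) : ℤ)) '' (insert a (s:Set ℕ))) := by
      refine Ideal.span_mono ?_ ih
      exact Set.image_mono (Set.subset_insert a _)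
    rw [Finset.coe_insert, show (GCDMonoid.gcd (f a) (s.gcd f)) = Nat.gcd (f a) (s.gcd f) from rfl, hone]
    exact Ideal.add_mem _ (Ideal.mul_mem_right _ _ h1) (Ideal.mul_mem_right _ _ h2)

open Polynomial in
/-- In `ℤ[x]/⟨C(n,1)x, ..., C(n,n)xⁿ⟩`, an integer `m` annihilates the class of `x^r`
iff `b_{n,r} = gcd{C(n,1),...,C(n,r)}` divides `m`. -/
theorem stmt_12 (n r : ℕ) (hn : 2 ≤ n) (hr1 : 1 ≤ r) (hrn : r ≤ n) (m : ℤ) :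
    m • ((Ideal.Quotient.mk (Ideal.span
        {q : Polynomial ℤ | ∃ k, 1 ≤ k ∧ k ≤ n ∧ q = C (n.choose k : ℤ) * X ^ k}))
      ((X : Polynomial ℤ) ^ r)) = 0 ↔
      (((Finset.Icc 1 r).gcd n.choose : ℕ) : ℤ) ∣ m := by
  set S : Set (Polynomial ℤ) :=
    {q : Polynomial ℤ | ∃ k, 1 ≤ k ∧ k ≤ n ∧ q = C (n.choose k : ℤ) * X ^ k} with hS
  set I := Ideal.span S with hI
  set g : ℤ := (((Finset.Icc 1 r).gcd n.choose : ℕ) : ℤ) with hg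
  rw [← map_zsmul, Ideal.Quotient.eq_zero_iff_mem]
  constructor
  · intro hmem
    -- every p ∈ I has g ∣ p.coeff j for j ≤ r
    have key : ∀ p ∈ I, ∀ j ≤ r, g ∣ p.coeff j := by
      intro p hp
      induction hp using Submodule.span_induction with
      | mem q hq =>
        obtain ⟨k, hk1, hkn, rfl⟩ := hq
        intro j hj
        rw [coeff_C_mul, coeff_X_pow]
        by_cases hjk : j = k
        · subst hjk
          have : ((Finset.Icc 1 r).gcd n.choose) ∣ n.choose j :=
            Finset.gcd_dvd (Finset.mem_Icc.mpr ⟨hk1, hj⟩)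
          simpa using Int.natCast_dvd_natCast.mpr this
        · simp [hjk]
      | zero => intro j _; simp
      | add x y _ _ hx hy =>
        intro j hj
        rw [coeff_add]
        exact dvd_add (hx j hj) (hy j hj)
      | smul a x _ hx =>
        intro j hj
        rw [smul_eq_mul, coeff_mul]
        refine Finset.dvd_sum ?_
        rintro ⟨i, l⟩ hil
        have hl : l ≤ r := by
          have := Finset.HasAntidiagonal.mem_antidiagonal.mp hil
          omega
        exact Dvd.dvd.mul_left (hx l hl) _
    have := key _ hmem r le_rfl
    simpa [coeff_smul, coeff_X_pow] using this
  · intro hdvd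
    obtain ⟨c, rfl⟩ := hdvd
    have hCmul : ∀ a : ℤ, (a • ((X : Polynomial ℤ) ^ r)) = C a * X ^ r := by
      intro a; rw [smul_eq_C_mul]
    rw [hCmul, map_mul]
    -- suffices : C g * X^r ∈ I
    have hgen : ∀ k ∈ Finset.Icc 1 r, C ((n.choose k : ℕ) : ℤ) * X ^ r ∈ I := by
      intro k hk
      obtain ⟨hk1, hkr⟩ := Finset.mem_Icc.mp hk
      have hbase : C ((n.choose k : ℕ) : ℤ) * X ^ k ∈ I :=
        Ideal.subset_span ⟨k, hk1, le_trans hkr hrn, rfl⟩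
      have : C ((n.choose k : ℕ) : ℤ) * X ^ r
          = X ^ (r - k) * (C ((n.choose k : ℕ) : ℤ) * X ^ k) := by
        rw [mul_comm (X ^ (r - k)), mul_assoc, ← pow_add]
        congr 2
        omega
      rw [this]
      exact Ideal.mul_mem_left _ _ hbase
    -- K = set of a with C a * X^r ∈ I, an ideal of ℤ
    have hK : ∀ a : ℤ, a ∈ Ideal.span ((fun k => ((n.choose k : ℕ) : ℤ)) '' (Finset.Icc 1 r))
        → C a * X ^ r ∈ I := by
      intro a ha
      induction ha using Submodule.span_induction with
      | mem x hx =>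
        obtain ⟨k, hk, rfl⟩ := hx
        exact hgen k (by exact_mod_cast hk)
      | zero => simp
      | add x y _ _ hx hy => rw [map_add, add_mul]; exact Ideal.add_mem _ hx hy
      | smul b x _ hx =>
        rw [smul_eq_mul, map_mul, mul_assoc]
        exact Ideal.mul_mem_left _ _ hx
    have hgI : C g * X ^ r ∈ I := hK g (by simpa using gcd_mem_span_int (Finset.Icc 1 r) n.choose)
    rw [mul_comm (C g) (C c), mul_assoc]
    exact Ideal.mul_mem_left _ _ hgI
end

section
/- If n = p^r with p prime, then for every 0 ≤ s ≤ r, gcd{binom(p^r, 1), binom(p^r, 2), ..., binom(p^r, p^s)} = p^{r-s}. -/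
lemma aux_fact_choose (p r k : ℕ) (hp : p.Prime) (hk0 : k ≠ 0) (hkn : k ≤ p ^ r) :
    ((p ^ r).choose k).factorization p + k.factorization p = r := by
  have h := Nat.Prime.emultiplicity_choose_prime_pow_add_emultiplicity hp hkn hk0
  have hc : (p ^ r).choose k ≠ 0 := (Nat.choose_pos hkn).ne'
  have f1 : emultiplicity p ((p ^ r).choose k) = (((p ^ r).choose k).factorization p : ℕ∞) := by
    rw [← Nat.multiplicity_eq_factorization hp hc,
      (Nat.finiteMultiplicity_iff.2 ⟨hp.ne_one, Nat.pos_of_ne_zero hc⟩).emultiplicity_eq_multiplicity]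
  have f2 : emultiplicity p k = ((k.factorization p : ℕ) : ℕ∞) := by
    rw [← Nat.multiplicity_eq_factorization hp hk0,
      (Nat.finiteMultiplicity_iff.2 ⟨hp.ne_one, Nat.pos_of_ne_zero hk0⟩).emultiplicity_eq_multiplicity]
  rw [f1, f2, ← Nat.cast_add] at h
  exact_mod_cast h

/-- For `n = p^r` a prime power and `0 ≤ s ≤ r`:
`gcd{C(p^r,1),...,C(p^r,p^s)} = p^{r-s}`. -/
theorem stmt_13 (p r s : ℕ) (hp : p.Prime) (hs : s ≤ r) :
    (Finset.Icc 1 (p ^ s)).gcd (p ^ r).choose = p ^ (r - s) := by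
  have hp1 : 1 < p := hp.one_lt
  have hpsr : p ^ s ≤ p ^ r := Nat.pow_le_pow_right hp.pos hs
  apply Nat.dvd_antisymm
  · -- gcd divides p^(r-s)
    have hmem : p ^ s ∈ Finset.Icc 1 (p ^ s) :=
      Finset.mem_Icc.2 ⟨Nat.one_le_pow _ _ hp.pos, le_rfl⟩
    have h1 : 1 ∈ Finset.Icc 1 (p ^ s) :=
      Finset.mem_Icc.2 ⟨le_rfl, Nat.one_le_pow _ _ hp.pos⟩
    have hg1 : (Finset.Icc 1 (p ^ s)).gcd (p ^ r).choose ∣ p ^ r := by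
      have h2 : (Finset.Icc 1 (p ^ s)).gcd (p ^ r).choose ∣ (p ^ r).choose 1 :=
        Finset.gcd_dvd h1
      rwa [Nat.choose_one_right] at h2
    obtain ⟨i, hir, hgi⟩ := (Nat.dvd_prime_pow hp).1 hg1
    have hgps : (Finset.Icc 1 (p ^ s)).gcd (p ^ r).choose ∣ (p ^ r).choose (p ^ s) :=
      Finset.gcd_dvd hmem
    have hfc : ((p ^ r).choose (p ^ s)).factorization p = r - s := by
      have h3 := aux_fact_choose p r (p ^ s) hp (pow_ne_zero s hp.pos.ne') hpsr
      rw [Nat.Prime.factorization_pow hp, Finsupp.single_eq_same] at h3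
      omega
    have hc0 : (p ^ r).choose (p ^ s) ≠ 0 := (Nat.choose_pos hpsr).ne'
    rw [hgi] at hgps ⊢
    have : i ≤ r - s := by
      have := (Nat.Prime.pow_dvd_iff_le_factorization hp hc0).1 hgps
      omega
    exact pow_dvd_pow p this
  · -- p^(r-s) divides gcd
    apply Finset.dvd_gcd
    intro k hk
    rw [Finset.mem_Icc] at hk
    have hk0 : k ≠ 0 := by omega
    have hkr : k ≤ p ^ r := hk.2.trans hpsr
    have hc0 : (p ^ r).choose k ≠ 0 := (Nat.choose_pos hkr).ne'
    have hfk : k.factorization p ≤ s := by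
      have hd : p ^ k.factorization p ∣ k := Nat.ordProj_dvd k p
      have hle : p ^ k.factorization p ≤ p ^ s :=
        (Nat.le_of_dvd (Nat.pos_of_ne_zero hk0) hd).trans hk.2
      exact (Nat.pow_le_pow_iff_right hp1).1 hle
    have := aux_fact_choose p r k hp hk0 hkr
    exact (Nat.Prime.pow_dvd_iff_le_factorization hp hc0).2 (by omega)
end

section
/- Let n ≥ 2 with prime factorization p_1^{r_1}⋯p_t^{r_t} and let b_{n,k} = gcd{binom(n,1),...,binom(n,k)}. Then for any 1 ≤ k ≤ n, b_{n,k} = ∏_{i=1}^{t} p_i^{max(0, r_i - ⌊log_{p_i} k⌋')} where ⌊log_{p_i} k⌋' denotes the number of powers p_i^s (s ≥ 1) with p_i^s ≤ k. Equivalently, the p_i-adic valuation of b_{n,k} equals max(0, r_i − #{s ≥ 1 : p_i^s ≤ k}). -/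
open Nat

/-- If `p^m ∣ n`, the `p`-adic valuation of `C(n, p^m)` is `v_p(n) - m`. -/
private lemma key_val {p n m : ℕ} (hp : p.Prime) (hn : 0 < n) (hm : p ^ m ∣ n) :
    padicValNat p (n.choose (p ^ m)) = padicValNat p n - m := by
  haveI : Fact p.Prime := ⟨hp⟩
  set r := padicValNat p n with hr
  have hmr : m ≤ r := (padicValNat_dvd_iff_le hn.ne').mp hm
  have hpr : p ^ r ∣ n := pow_padicValNat_dvd
  have hp1 : 1 < p := hp.one_lt
  have hkn : p ^ m ≤ n := Nat.le_of_dvd hn hm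
  have hrlog : r ≤ Nat.log p n := Nat.le_log_of_pow_le hp1 (Nat.le_of_dvd hn hpr)
  rw [padicValNat_choose hkn (Nat.lt_succ_self _)]
  have hset : ((Finset.Ico 1 (Nat.log p n).succ).filter
      fun i => p ^ i ≤ p ^ m % p ^ i + (n - p ^ m) % p ^ i) = Finset.Icc (m + 1) r := by
    ext i
    simp only [Finset.mem_filter, Finset.mem_Ico, Finset.mem_Icc, Nat.lt_succ_iff]
    constructor
    · rintro ⟨⟨h1, h2⟩, hc⟩
      have hpi0 : 0 < p ^ i := pow_pos hp.pos i
      constructor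
      · -- show m + 1 ≤ i
        by_contra h
        push_neg at h
        have him : i ≤ m := by omega
        have e1 : p ^ m % p ^ i = 0 := Nat.mod_eq_zero_of_dvd (pow_dvd_pow p him)
        have e2 : (n - p ^ m) % p ^ i = 0 := Nat.mod_eq_zero_of_dvd
          (Nat.dvd_sub ((pow_dvd_pow p him).trans hm) (pow_dvd_pow p him))
        rw [e1, e2] at hc
        omega
      · -- show i ≤ r
        by_contra h
        push_neg at h
        have hpm_lt : p ^ m < p ^ i := Nat.pow_lt_pow_right hp1 (by omega)
        have hmod : p ^ m % p ^ i = p ^ m := Nat.mod_eq_of_lt hpm_lt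
        rw [hmod] at hc
        set w := (n - p ^ m) % p ^ i with hw
        have hwlt : w < p ^ i := Nat.mod_lt _ hpi0
        have hnmod : n % p ^ i = p ^ m + w - p ^ i := by
          have h1 : n % p ^ i = (p ^ m + (n - p ^ m)) % p ^ i := by
            rw [Nat.add_sub_cancel' hkn]
          rw [h1, Nat.add_mod, hmod, ← hw, Nat.mod_eq_sub_mod hc,
            Nat.mod_eq_of_lt (by omega)]
        have hdvdmod : p ^ r ∣ n % p ^ i := by
          have : n % p ^ i = n - p ^ i * (n / p ^ i) := by
            have := Nat.mod_add_div n (p ^ i)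
            omega
          rw [this]
          exact Nat.dvd_sub hpr ((pow_dvd_pow p (by omega)).trans (Dvd.intro _ rfl))
        have hlt : n % p ^ i < p ^ r := by
          have : p ^ m ≤ p ^ r := Nat.pow_le_pow_right hp.pos hmr
          omega
        have hzero : n % p ^ i = 0 := by
          rcases Nat.eq_zero_or_pos (n % p ^ i) with h0 | h0
          · exact h0
          · exact absurd (Nat.le_of_dvd h0 hdvdmod) (by omega)
        have : p ^ (r + 1) ∣ n :=
          (pow_dvd_pow p (by omega)).trans (Nat.dvd_of_mod_eq_zero hzero)
        exact pow_succ_padicValNat_not_dvd hn.ne' this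
    · rintro ⟨h1, h2⟩
      have hpi0 : 0 < p ^ i := pow_pos hp.pos i
      refine ⟨⟨by omega, le_trans h2 hrlog⟩, ?_⟩
      have hpi_dvd : p ^ i ∣ n := (pow_dvd_pow p h2).trans hpr
      have hin : p ^ i ≤ n := Nat.le_of_dvd hn hpi_dvd
      have hpm_lt : p ^ m < p ^ i := Nat.pow_lt_pow_right hp1 (by omega)
      have hmod : p ^ m % p ^ i = p ^ m := Nat.mod_eq_of_lt hpm_lt
      have h1pm : 1 ≤ p ^ m := Nat.one_le_pow _ _ hp.pos
      have e2 : (n - p ^ m) % p ^ i = p ^ i - p ^ m := by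
        have hsplit : n - p ^ m = (n - p ^ i) + (p ^ i - p ^ m) := by omega
        have hz : (n - p ^ i) % p ^ i = 0 :=
          Nat.mod_eq_zero_of_dvd (Nat.dvd_sub hpi_dvd dvd_rfl)
        rw [hsplit, Nat.add_mod, hz, Nat.zero_add, Nat.mod_mod_of_dvd _ dvd_rfl,
          Nat.mod_eq_of_lt (by omega)]
      rw [hmod, e2]
      omega
  rw [hset, Nat.card_Icc]
  omega

/-- The `p`-adic valuation of `b_{n,k} = gcd{C(n,1),...,C(n,k)}` at a prime factor `p` of `n`
equals `v_p(n) − #{s ≥ 1 : p^s ≤ k}` (truncated subtraction realizing `max(0,·)`). -/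
theorem stmt_14 (n k p : ℕ) (hn : 2 ≤ n) (hk1 : 1 ≤ k) (hkn : k ≤ n)
    (hp : p.Prime) (hpn : p ∣ n) :
    padicValNat p ((Finset.Icc 1 k).gcd n.choose) =
      padicValNat p n - ((Finset.Icc 1 k).filter (fun s => p ^ s ≤ k)).card := by
  haveI : Fact p.Prime := ⟨hp⟩
  have hn0 : 0 < n := by omega
  have hp1 : 1 < p := hp.one_lt
  set r := padicValNat p n with hr
  set L := Nat.log p k with hL
  have hcard : ((Finset.Icc 1 k).filter (fun s => p ^ s ≤ k)).card = L := by
    have hEq : (Finset.Icc 1 k).filter (fun s => p ^ s ≤ k) = Finset.Icc 1 L := by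
      ext s
      simp only [Finset.mem_filter, Finset.mem_Icc]
      constructor
      · rintro ⟨⟨h1, h2⟩, h3⟩
        exact ⟨h1, (Nat.le_log_iff_pow_le hp1 (by omega)).mpr h3⟩
      · rintro ⟨h1, h2⟩
        have h3 : p ^ s ≤ k := (Nat.le_log_iff_pow_le hp1 (by omega)).mp h2
        have h4 : s < p ^ s := Nat.lt_pow_self hp1
        exact ⟨⟨h1, by omega⟩, h3⟩
    rw [hEq, Nat.card_Icc]
    omega
  rw [hcard]
  set G := (Finset.Icc 1 k).gcd n.choose with hG
  have h1mem : (1 : ℕ) ∈ Finset.Icc 1 k := by simp [hk1]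
  have hGn : G ∣ n := by
    have h2 := Finset.gcd_dvd (f := n.choose) h1mem
    simpa using h2
  have hG0 : G ≠ 0 := by
    intro h
    rw [h] at hGn
    omega
  -- lower bound : r - L ≤ v_p(G)
  have hlow : r - L ≤ padicValNat p G := by
    rw [← padicValNat_dvd_iff_le hG0]
    apply Finset.dvd_gcd
    intro i hi
    simp only [Finset.mem_Icc] at hi
    have hikn : i ≤ n := le_trans hi.2 hkn
    have hcpos : 0 < n.choose i := Nat.choose_pos hikn
    have hiden : n.choose i * i = n * (n - 1).choose (i - 1) := by
      have h := Nat.add_one_mul_choose_eq (n - 1) (i - 1)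
      have e1 : n - 1 + 1 = n := by omega
      have e2 : i - 1 + 1 = i := by omega
      rw [e1, e2] at h
      exact h.symm
    have hvn : r ≤ padicValNat p (n.choose i * i) := by
      rw [← padicValNat_dvd_iff_le (Nat.mul_pos hcpos (by omega : 0 < i)).ne']
      exact pow_padicValNat_dvd.trans (hiden ▸ dvd_mul_right n _)
    rw [padicValNat.mul hcpos.ne' (by omega)] at hvn
    have hvi : padicValNat p i ≤ L := by
      have hle : p ^ padicValNat p i ≤ k :=
        le_trans (Nat.le_of_dvd (by omega) pow_padicValNat_dvd) hi.2
      exact (Nat.le_log_iff_pow_le hp1 (by omega)).mpr hle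
    exact (pow_dvd_pow p (by omega)).trans pow_padicValNat_dvd
  -- upper bound : v_p(G) ≤ r - L
  set m := min L r with hm
  have hpm_dvd : p ^ m ∣ n := (pow_dvd_pow p (min_le_right _ _)).trans pow_padicValNat_dvd
  have hpm_mem : p ^ m ∈ Finset.Icc 1 k := by
    simp only [Finset.mem_Icc]
    refine ⟨Nat.one_le_pow _ _ hp.pos, ?_⟩
    calc p ^ m ≤ p ^ L := Nat.pow_le_pow_right hp.pos (min_le_left _ _)
      _ ≤ k := Nat.pow_log_le_self p (by omega)
  have hup : padicValNat p G ≤ r - m := by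
    have hdvd : G ∣ n.choose (p ^ m) := Finset.gcd_dvd hpm_mem
    have hkey : padicValNat p (n.choose (p ^ m)) = r - m := key_val hp hn0 hpm_dvd
    have hcp : n.choose (p ^ m) ≠ 0 :=
      (Nat.choose_pos (le_trans (Finset.mem_Icc.mp hpm_mem).2 hkn)).ne'
    have := (padicValNat_dvd_iff_le (p := p) hcp).mp (pow_padicValNat_dvd.trans hdvd)
    omega
  omega
end

section
/- For a prime p and integers r ≥ 1, the ring J_{p,r} = ℤ[ω]⁺/⟨p^r ω, p^{r-1} ω^p, p^{r-2} ω^{p²}, ..., ω^{p^r}⟩ (positive-degree part of ℤ[ω] modulo the listed relations) is a finite abelian group in each degree, and the additive order of ω^k in J_{p,r} equals p^{r-s} where s = #{j ≥ 1 : p^j ≤ k} (and ω^k = 0 when k ≥ p^r). -/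
open Polynomial in
/-- In `J_{p,r} = ℤ[ω]/⟨p^{r-j} ω^{p^j} : 0 ≤ j ≤ r⟩` the additive order of `ω^k` (`k ≥ 1`)
is `p^{r-s}` where `s = #{j ≥ 1 : p^j ≤ k}`; in particular `ω^k = 0` when `k ≥ p^r`. -/
theorem stmt_15 (p r k : ℕ) (hp : p.Prime) (hr : 1 ≤ r) (hk : 1 ≤ k) :
    addOrderOf ((Ideal.Quotient.mk (Ideal.span
        {q : Polynomial ℤ | ∃ j, j ≤ r ∧ q = C ((p : ℤ) ^ (r - j)) * X ^ (p ^ j)}))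
      ((X : Polynomial ℤ) ^ k)) =
      p ^ (r - ((Finset.Icc 1 k).filter (fun j => p ^ j ≤ k)).card) := by
  have hp1 : 1 < p := hp.one_lt
  have hk0 : k ≠ 0 := by omega
  set S : Set (Polynomial ℤ) :=
    {q : Polynomial ℤ | ∃ j, j ≤ r ∧ q = C ((p : ℤ) ^ (r - j)) * X ^ (p ^ j)} with hS
  set s := Nat.log p k with hs
  -- the filter computes Nat.log
  have hcard : ((Finset.Icc 1 k).filter (fun j => p ^ j ≤ k)).card = s := by
    have : ((Finset.Icc 1 k).filter (fun j => p ^ j ≤ k)) = Finset.Icc 1 s := by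
      ext j
      simp only [Finset.mem_filter, Finset.mem_Icc]
      constructor
      · rintro ⟨⟨h1, _⟩, h2⟩
        exact ⟨h1, (Nat.le_log_iff_pow_le hp1 hk0).mpr h2⟩
      · rintro ⟨h1, h2⟩
        have hpk : p ^ j ≤ k := (Nat.le_log_iff_pow_le hp1 hk0).mp h2
        have : j < p ^ j := Nat.lt_pow_self hp1
        exact ⟨⟨h1, by omega⟩, hpk⟩
    rw [this, Nat.card_Icc]
    omega
  set t := min r s with ht
  have hts : t ≤ s := min_le_right _ _
  have htr : t ≤ r := min_le_left _ _
  have hptk : p ^ t ≤ k := le_trans (Nat.pow_le_pow_right hp.pos hts)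
    (Nat.pow_log_le_self p hk0)
  set c := r - t with hc
  -- key characterization of nsmul vanishing
  have key : ∀ n : ℕ, n • ((Ideal.Quotient.mk (Ideal.span S)) ((X : Polynomial ℤ) ^ k)) = 0
      ↔ p ^ c ∣ n := by
    intro n
    rw [← map_nsmul, Ideal.Quotient.eq_zero_iff_mem]
    constructor
    · intro hmem
      have hdvd : ∀ f ∈ Ideal.span S, ∀ m ≤ k, ((p : ℤ)) ^ c ∣ f.coeff m := by
        intro f hf
        refine Submodule.span_induction ?_ ?_ ?_ ?_ hf
        · rintro q ⟨j, hj, rfl⟩ m hm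
          rw [coeff_C_mul, coeff_X_pow]
          by_cases hmj : m = p ^ j
          · have hjk : p ^ j ≤ k := hmj ▸ hm
            have hjs : j ≤ s := (Nat.le_log_iff_pow_le hp1 hk0).mpr hjk
            have hjt : j ≤ t := le_min hj hjs
            rw [if_pos hmj, mul_one]
            exact pow_dvd_pow _ (by omega)
          · rw [if_neg hmj, mul_zero]
            exact dvd_zero _
        · intro m _; simp
        · intro f g _ _ hf hg m hm
          rw [Polynomial.coeff_add]
          exact dvd_add (hf m hm) (hg m hm)
        · intro a f _ hf m hm
          rw [smul_eq_mul, Polynomial.coeff_mul]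
          refine Finset.dvd_sum ?_
          rintro ⟨i, j⟩ hij
          rw [Finset.HasAntidiagonal.mem_antidiagonal] at hij
          exact Dvd.dvd.mul_left (hf j (by omega)) _
      have := hdvd _ hmem k le_rfl
      rw [Polynomial.coeff_smul, coeff_X_pow, if_pos rfl] at this
      simp only [smul_eq_mul, nsmul_eq_mul, mul_one] at this
      exact_mod_cast this
    · rintro ⟨m, rfl⟩
      have hgen : (C ((p : ℤ) ^ (r - t)) * X ^ (p ^ t)) ∈ Ideal.span S :=
        Ideal.subset_span ⟨t, htr, rfl⟩
      have hxe : (X : Polynomial ℤ) ^ k = X ^ (k - p ^ t) * X ^ (p ^ t) := by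
        rw [← pow_add, Nat.sub_add_cancel hptk]
      have : (p ^ c * m : ℕ) • ((X : Polynomial ℤ) ^ k)
          = (C ((m : ℤ)) * X ^ (k - p ^ t)) * (C ((p : ℤ) ^ (r - t)) * X ^ (p ^ t)) := by
        rw [nsmul_eq_mul, hxe]
        push_cast [← C_eq_natCast]
        push_cast [← C_eq_intCast]
        rw [map_pow]
        ring
      rw [this]
      exact Ideal.mul_mem_left _ _ hgen
  have h1 : addOrderOf ((Ideal.Quotient.mk (Ideal.span S)) ((X : Polynomial ℤ) ^ k)) ∣ p ^ c :=
    addOrderOf_dvd_of_nsmul_eq_zero ((key _).mpr dvd_rfl)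
  have h2 : p ^ c ∣ addOrderOf ((Ideal.Quotient.mk (Ideal.span S)) ((X : Polynomial ℤ) ^ k)) :=
    (key _).mp (addOrderOf_nsmul_eq_zero _)
  rw [Nat.dvd_antisymm h1 h2, hcard]
  congr 1
  omega
end

section
/- In an anticommutative graded ring, suppose η_1, ..., η_n are odd-degree elements such that the product η_1 ⋯ η_n generates an infinite cyclic group (is a ℤ-basis element of its degree component). Then the 2^n monomials {η_I = ∏_{i∈I} η_i : I ⊆ {1,...,n}} are linearly independent over ℤ, and no η_I is divisible by an integer a > 1 in the ring (i.e., each η_I generates a direct ℤ-summand). -/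
section Aux

variable {n : ℕ} {A : Type*} [Ring A] (η : Fin n → A)

theorem aux_perm_sign (hanti : ∀ i j, η i * η j = - (η j * η i))
    {l₁ l₂ : List (Fin n)} (h : l₁.Perm l₂) :
    ∃ ε : ℤ, (ε = 1 ∨ ε = -1) ∧ (l₁.map η).prod = ε • (l₂.map η).prod := by
  induction h with
  | nil => exact ⟨1, Or.inl rfl, by simp⟩
  | cons x h ih =>
      obtain ⟨ε, hε, he⟩ := ih
      exact ⟨ε, hε, by simp only [List.map_cons, List.prod_cons, he, mul_smul_comm]⟩
  | swap x y l =>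
      refine ⟨-1, Or.inr rfl, ?_⟩
      simp only [List.map_cons, List.prod_cons, ← mul_assoc, hanti y x]
      simp
  | trans h₁ h₂ ih₁ ih₂ =>
      obtain ⟨ε₁, hε₁, e₁⟩ := ih₁
      obtain ⟨ε₂, hε₂, e₂⟩ := ih₂
      refine ⟨ε₁ * ε₂, ?_, by rw [e₁, e₂, smul_smul]⟩
      rcases hε₁ with h | h <;> rcases hε₂ with h' | h' <;> simp [h, h']

theorem aux_dup_zero (hanti : ∀ i j, η i * η j = - (η j * η i))
    (hsq : ∀ i, η i * η i = 0) :
    ∀ l : List (Fin n), ¬ l.Nodup → (l.map η).prod = 0 := by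
  intro l
  induction l with
  | nil => intro h; exact absurd List.nodup_nil h
  | cons x l ih =>
      intro h
      rw [List.nodup_cons] at h
      push_neg at h
      by_cases hx : x ∈ l
      · obtain ⟨ε, hε, he⟩ := aux_perm_sign η hanti (List.perm_cons_erase hx)
        simp only [List.map_cons, List.prod_cons, he, List.map_cons, List.prod_cons]
        rw [mul_smul_comm, ← mul_assoc, hsq, zero_mul, smul_zero]
      · simp only [List.map_cons, List.prod_cons, ih (h hx), mul_zero]

theorem aux_prod_mul_compl (hanti : ∀ i j, η i * η j = - (η j * η i))
    (I : Finset (Fin n)) :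
    ∃ ε : ℤ, (ε = 1 ∨ ε = -1) ∧
      ((I.sort (· ≤ ·)).map η).prod * ((Iᶜ.sort (· ≤ ·)).map η).prod
        = ε • ((List.finRange n).map η).prod := by
  have hperm : (I.sort (· ≤ ·) ++ Iᶜ.sort (· ≤ ·)).Perm (List.finRange n) := by
    rw [← Multiset.coe_eq_coe]
    have h1 : ((I.sort (· ≤ ·) : List (Fin n)) : Multiset (Fin n)) = I.val := I.sort_eq _
    have h2 : ((Iᶜ.sort (· ≤ ·) : List (Fin n)) : Multiset (Fin n)) = Iᶜ.val := Iᶜ.sort_eq _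
    have h3 : ((List.finRange n : List (Fin n)) : Multiset (Fin n))
        = (Finset.univ : Finset (Fin n)).val := rfl
    rw [show ((I.sort (· ≤ ·) ++ Iᶜ.sort (· ≤ ·) : List (Fin n)) : Multiset (Fin n))
        = (↑(I.sort (· ≤ ·)) + ↑(Iᶜ.sort (· ≤ ·)) : Multiset (Fin n)) from rfl, h1, h2, h3]
    have : (I.disjUnion Iᶜ disjoint_compl_right).val = I.val + Iᶜ.val := rfl
    rw [← this, Finset.disjUnion_eq_union, Finset.union_compl]
  obtain ⟨ε, hε, he⟩ := aux_perm_sign η hanti hperm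
  exact ⟨ε, hε, by rw [← he, List.map_append, List.prod_append]⟩

theorem aux_not_subset_zero (hanti : ∀ i j, η i * η j = - (η j * η i))
    (hsq : ∀ i, η i * η i = 0) {I J : Finset (Fin n)} (h : ¬ I ⊆ J) :
    ((I.sort (· ≤ ·)).map η).prod * ((Jᶜ.sort (· ≤ ·)).map η).prod = 0 := by
  rw [← List.prod_append, ← List.map_append]
  apply aux_dup_zero η hanti hsq
  rw [List.nodup_append]
  push_neg
  intro _ _
  obtain ⟨x, hxI, hxJ⟩ := Finset.not_subset.mp h
  exact ⟨x, by simpa using hxI, x, by simp [hxJ], rfl⟩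

end Aux

/-- In a graded ring, if `η_1,...,η_n` are anticommuting odd-degree elements of square
zero whose full product generates an infinite cyclic direct summand, then the `2^n`
monomials `η_I` are linearly independent over `ℤ` and no `η_I` is divisible by an
integer `a > 1`. -/
theorem stmt_16 (n : ℕ) {A : Type*} [Ring A] (𝒜 : ℕ → AddSubgroup A) [GradedRing 𝒜]
    (d : Fin n → ℕ) (hodd : ∀ i, Odd (d i))
    (η : Fin n → A) (hmem : ∀ i, η i ∈ 𝒜 (d i))
    (hanti : ∀ i j, η i * η j = - (η j * η i))
    (hsq : ∀ i, η i * η i = 0)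
    (hord : ∀ m : ℤ, m • ((List.finRange n).map η).prod = 0 → m = 0)
    (hgen : ∀ (a : ℤ) (x : A), ((List.finRange n).map η).prod = a • x → a = 1 ∨ a = -1) :
    LinearIndependent ℤ (fun I : Finset (Fin n) => ((I.sort (· ≤ ·)).map η).prod) ∧
    ∀ (I : Finset (Fin n)) (a : ℤ), 1 < a →
      ¬ ∃ x : A, ((I.sort (· ≤ ·)).map η).prod = a • x := by
  constructor
  · rw [linearIndependent_iff']
    intro s g hsum
    by_contra hc
    push_neg at hc
    obtain ⟨J₀, hJ₀s, hJ₀⟩ := hc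
    set T : Finset (Finset (Fin n)) := s.filter (fun I => g I ≠ 0) with hT
    have hTne : T.Nonempty := ⟨J₀, by simp [hT, hJ₀s, hJ₀]⟩
    obtain ⟨J, hJT, hJmin⟩ := T.exists_min_image (fun I => I.card) hTne
    have hJs : J ∈ s := (Finset.mem_filter.mp hJT).1
    have hgJ : g J ≠ 0 := (Finset.mem_filter.mp hJT).2
    obtain ⟨ε, hε, hεe⟩ := aux_prod_mul_compl η hanti J
    have key : (∑ I ∈ s, g I • ((I.sort (· ≤ ·)).map η).prod)
        * ((Jᶜ.sort (· ≤ ·)).map η).prod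
        = g J • (((J.sort (· ≤ ·)).map η).prod * ((Jᶜ.sort (· ≤ ·)).map η).prod) := by
      rw [Finset.sum_mul]
      refine Finset.sum_eq_single J (fun I hIs hIJ => ?_) (fun h => absurd hJs h) |>.trans ?_
      · by_cases hgI : g I = 0
        · simp [hgI]
        · have hIT : I ∈ T := Finset.mem_filter.mpr ⟨hIs, hgI⟩
          have hsub : ¬ I ⊆ J := by
            intro hsub
            exact hIJ (Finset.eq_of_subset_of_card_le hsub (hJmin I hIT))
          rw [smul_mul_assoc, aux_not_subset_zero η hanti hsq hsub, smul_zero]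
      · rw [smul_mul_assoc]
    rw [hsum, zero_mul] at key
    rw [hεe, smul_smul] at key
    have := hord _ key.symm
    rcases hε with h | h <;> simp [h] at this <;> exact hgJ this
  · rintro I a ha ⟨x, hx⟩
    obtain ⟨ε, hε, hεe⟩ := aux_prod_mul_compl η hanti I
    rw [hx, smul_mul_assoc] at hεe
    have h2 : ((List.finRange n).map η).prod
        = ε • a • (x * ((Iᶜ.sort (· ≤ ·)).map η).prod) := by
      rw [hεe, smul_smul]
      rcases hε with h | h <;> simp [h]
    rw [smul_comm] at h2
    rcases hgen a _ h2 with h | h <;> omega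
end
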